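/- Let ρ ∈ (0,1), let c_k = ((1−ρ)/(ρ(1+ρ))) ∑_{i=k}^∞ binom(2i,i) ρ^i / ((i+1)(1+ρ)^{2i}), and define b̃_j = ∑_{k=j+1}^∞ c_k / k for j ≥ 0. Then, as j → ∞, b̃_j / [ (4(1+ρ)/((1−ρ)³ √π)) · j^{−5/2} · (4ρ/(1+ρ)²)^j ] → 1. -/

import Mathlib

open MeasureTheory Filter Topology

/-- Pollaczek polynomials with parameters a = 1, b = 0. -/
noncomputable def pol : ℕ → ℝ → ℝ
  | 0, _ => 1
  | 1, x => 2 * x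
  | (n+2), x => (2 * ((n:ℝ) + 2) * x * pol (n+1) x - ((n:ℝ) + 1) * pol n x) / ((n:ℝ) + 2)

/-- Rescaled polynomials `Q_n(x) = ρ^{-n/2} P_n((1+ρ)x/(2√ρ))`. -/
noncomputable def Q (ρ : ℝ) (n : ℕ) (x : ℝ) : ℝ :=
  pol n ((1 + ρ) * x / (2 * Real.sqrt ρ)) / (Real.sqrt ρ) ^ n

/-- `x_ρ(θ) = (2√ρ/(1+ρ)) cos θ`. -/
noncomputable def X (ρ θ : ℝ) : ℝ := (2 * Real.sqrt ρ / (1 + ρ)) * Real.cos θ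

/-- Density of the spectral measure in the variable θ. -/
noncomputable def W (θ : ℝ) : ℝ :=
  (Real.sin θ / Real.cosh (Real.pi * (Real.cos θ / Real.sin θ) / 2)) *
    Real.exp ((θ - Real.pi / 2) * (Real.cos θ / Real.sin θ))

/-- `G_ρ(θ) = 𝒫(θ, √ρ) = ∑ ρ^m Q_m(x_ρ(θ))`. -/
noncomputable def G (ρ θ : ℝ) : ℝ :=
  (1 - 2 * Real.sqrt ρ * Real.cos θ + ρ) ^ (-(1:ℝ)/2) *
    Real.exp ((Real.cos θ / Real.sin θ) *
      Real.arctan (Real.sqrt ρ * Real.sin θ / (1 - Real.sqrt ρ * Real.cos θ)))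

/-- Powers of the sub-stochastic tridiagonal matrix `A` of the absorbed M/M/1-PS chain. -/
noncomputable def ker (ρ : ℝ) : ℕ → ℕ → ℕ → ℝ
  | 0, n, m => if n = m then 1 else 0
  | (k+1), 0, m => (ρ / (1 + ρ)) * ker ρ k 1 m
  | (k+1), (n+1), m => (ρ / (1 + ρ)) * ker ρ k (n+2) m +
      (((n:ℝ) + 1) / (((n:ℝ) + 2) * (1 + ρ))) * ker ρ k n m

/-- Distribution of the number of customers served in the residual busy period. -/
noncomputable def resBusy (ρ : ℝ) (ℓ : ℕ) : ℝ :=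
  ((1 - ρ) / (ρ * (1 + ρ))) * ∑' k : ℕ,
    (Nat.choose (2*(k + ℓ)) (k + ℓ) : ℝ) * ρ ^ (k + ℓ) /
      (((k:ℝ) + (ℓ:ℝ) + 1) * (1 + ρ) ^ (2*(k + ℓ)))

/-- `b̃_j = ∑_{k>j} P(b = k)/k`: the number of customers served before a uniformly
picked customer of the residual busy period. -/
noncomputable def btilde (ρ : ℝ) (j : ℕ) : ℝ :=
  ∑' k : ℕ, resBusy ρ (k + j + 1) / ((k:ℝ) + (j:ℝ) + 1)


section Aux
set_option maxHeartbeats 1000000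
open Filter Topology Real
lemma cb_fact (n : ℕ) :
    ((2 * n).factorial : ℝ) = (Nat.centralBinom n : ℝ) * (n.factorial : ℝ) ^ 2 := by
  rw [Nat.centralBinom]
  rw [← Nat.choose_mul_factorial_mul_factorial (by omega : n ≤ 2 * n)]
  have h : 2 * n - n = n := by omega
  rw [h]; push_cast; ring

lemma cb_eq (n : ℕ) (hn : 1 ≤ n) :
    (Nat.centralBinom n : ℝ) * Real.sqrt n / 4 ^ n
      = Stirling.stirlingSeq (2 * n) / (Stirling.stirlingSeq n) ^ 2 := by
  have hn0 : (0:ℝ) < n := by exact_mod_cast hn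
  have hsn : Real.sqrt n > 0 := Real.sqrt_pos.mpr hn0
  have hs2n : Real.sqrt (2 * (n:ℝ)) > 0 := Real.sqrt_pos.mpr (by linarith)
  have hs4n : Real.sqrt (2 * ((2*n : ℕ):ℝ)) > 0 := by
    apply Real.sqrt_pos.mpr; push_cast; linarith
  have he : (0:ℝ) < Real.exp 1 := Real.exp_pos 1
  have hne : ((n:ℝ) / Real.exp 1) ^ n ≠ 0 := by positivity
  have hfne : (n.factorial : ℝ) ≠ 0 := by positivity
  unfold Stirling.stirlingSeq
  rw [cb_fact n]
  have hpow : (((2*n : ℕ):ℝ) / Real.exp 1) ^ (2*n) = 4 ^ n * (((n:ℝ)/Real.exp 1) ^ n) ^ 2 := by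
    push_cast
    rw [show (2 * (n:ℝ)) / Real.exp 1 = 2 * ((n:ℝ)/Real.exp 1) by ring]
    rw [mul_pow, ← pow_mul, pow_mul 2 2 n]
    norm_num; ring
  rw [hpow]
  have h4 : Real.sqrt (2 * ((2*n:ℕ):ℝ)) = 2 * Real.sqrt n := by
    push_cast
    rw [show 2 * (2 * (n:ℝ)) = 2^2 * n by ring, Real.sqrt_mul (by positivity),
      Real.sqrt_sq (by norm_num : (0:ℝ) ≤ 2)]
  rw [h4]
  have hsq : Real.sqrt (2*(n:ℝ)) ^ 2 = 2 * n := Real.sq_sqrt (by linarith)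
  field_simp
  ring_nf
  rw [Real.sq_sqrt (Nat.cast_nonneg n), Real.sq_sqrt (by positivity : (0:ℝ) ≤ n * 2)]
  ring

lemma centralBinom_asymp :
    Tendsto (fun n : ℕ => (Nat.centralBinom n : ℝ) * Real.sqrt n / 4 ^ n) atTop
      (𝓝 (1 / Real.sqrt Real.pi)) := by
  have h2 : Tendsto (fun n : ℕ => Stirling.stirlingSeq (2 * n)) atTop (𝓝 (Real.sqrt Real.pi)) :=
    Stirling.tendsto_stirlingSeq_sqrt_pi.comp
      (tendsto_atTop_mono (fun n => by simp [id]; omega) tendsto_id)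
  have h1 : Tendsto (fun n : ℕ => (Stirling.stirlingSeq n) ^ 2) atTop (𝓝 (Real.pi)) := by
    have := Stirling.tendsto_stirlingSeq_sqrt_pi.mul Stirling.tendsto_stirlingSeq_sqrt_pi
    rw [Real.mul_self_sqrt Real.pi_pos.le] at this
    simpa [pow_two] using this
  have key := h2.div h1 (by positivity : Real.pi ≠ 0)
  have heq : Real.sqrt Real.pi / Real.pi = 1 / Real.sqrt Real.pi := by
    rw [div_eq_div_iff Real.pi_pos.ne' (Real.sqrt_pos.mpr Real.pi_pos).ne',
      one_mul, Real.mul_self_sqrt Real.pi_pos.le]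
  rw [heq] at key
  apply key.congr'
  filter_upwards [eventually_ge_atTop 1] with n hn
  exact (cb_eq n hn).symm

lemma tail_equiv {r L p : ℝ} (hr0 : 0 < r) (hr1 : r < 1) (hp : 0 ≤ p) {a : ℕ → ℝ}
    (ha : Tendsto (fun n : ℕ => a n / (r ^ n * (n:ℝ) ^ (-p))) atTop (𝓝 L)) :
    Tendsto (fun n : ℕ => (∑' k : ℕ, a (k + n)) / (r ^ n * (n:ℝ) ^ (-p))) atTop
      (𝓝 (L / (1 - r))) := by
  set d : ℕ → ℝ := fun m => r ^ m * (m:ℝ) ^ (-p) with hd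
  have hd_pos : ∀ m : ℕ, 1 ≤ m → 0 < d m := by
    intro m hm
    have : (0:ℝ) < m := by exact_mod_cast hm
    exact mul_pos (pow_pos hr0 m) (Real.rpow_pos_of_pos this _)
  have hd_le : ∀ m : ℕ, 1 ≤ m → d m ≤ r ^ m := by
    intro m hm
    have h1 : (1:ℝ) ≤ m := by exact_mod_cast hm
    have : ((m:ℝ)) ^ (-p) ≤ 1 :=
      Real.rpow_le_one_of_one_le_of_nonpos h1 (neg_nonpos.mpr hp)
    calc d m ≤ r ^ m * 1 := by
          exact mul_le_mul_of_nonneg_left this (pow_nonneg hr0.le m)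
      _ = r ^ m := mul_one _
  have hgeom : Summable (fun i : ℕ => r ^ i) := summable_geometric_of_lt_one hr0.le hr1
  have hgeom_shift : ∀ n : ℕ, Summable (fun i : ℕ => r ^ (i + n)) := by
    intro n
    simpa [pow_add] using hgeom.mul_right (r ^ n)
  have hsum_d : ∀ n : ℕ, 1 ≤ n → Summable (fun i : ℕ => d (i + n)) := by
    intro n hn
    apply (hgeom_shift n).of_nonneg_of_le
    · intro i; exact (hd_pos (i + n) (by omega)).le
    · intro i; exact hd_le (i + n) (by omega)
  -- S n = ∑' i, r^i * (n/(n+i))^p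
  set S : ℕ → ℝ := fun n => ∑' i : ℕ, r ^ i * ((n:ℝ)/((n:ℝ)+(i:ℝ))) ^ p with hS
  have hterm_mem : ∀ (n i : ℕ), (0:ℝ) ≤ ((n:ℝ)/((n:ℝ)+(i:ℝ))) ∧ ((n:ℝ)/((n:ℝ)+(i:ℝ))) ≤ 1 := by
    intro n i
    constructor
    · positivity
    · rcases Nat.eq_zero_or_pos (n + i) with h | h
      · obtain ⟨h1, h2⟩ := Nat.add_eq_zero.mp h
        simp [h1, h2]
      · apply div_le_one_of_le₀
        · linarith [Nat.cast_nonneg (α := ℝ) i]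
        · positivity
  have hSbound : ∀ n i : ℕ, |r ^ i * ((n:ℝ)/((n:ℝ)+(i:ℝ))) ^ p| ≤ r ^ i := by
    intro n i
    obtain ⟨h0, h1⟩ := hterm_mem n i
    rw [abs_of_nonneg (by positivity)]
    calc r ^ i * ((n:ℝ)/((n:ℝ)+(i:ℝ))) ^ p ≤ r ^ i * 1 :=
          mul_le_mul_of_nonneg_left (Real.rpow_le_one h0 h1 hp) (pow_nonneg hr0.le i)
      _ = r ^ i := mul_one _
  have hS_summ : ∀ n : ℕ, Summable (fun i : ℕ => r ^ i * ((n:ℝ)/((n:ℝ)+(i:ℝ))) ^ p) := by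
    intro n
    apply hgeom.of_norm_bounded
    intro i; exact hSbound n i
  have hSle : ∀ n : ℕ, S n ≤ 1 / (1 - r) := by
    intro n
    rw [one_div, ← tsum_geometric_of_lt_one hr0.le hr1]
    exact Summable.tsum_le_tsum (fun i => (le_abs_self _).trans (hSbound n i)) (hS_summ n) hgeom
  have hS_lim : Tendsto S atTop (𝓝 (1 / (1 - r))) := by
    rw [one_div, ← tsum_geometric_of_lt_one hr0.le hr1]
    apply tendsto_tsum_of_dominated_convergence hgeom
    · intro i
      have h1 : Tendsto (fun n : ℕ => ((n:ℝ)/((n:ℝ)+(i:ℝ)))) atTop (𝓝 1) := by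
        have hb : Tendsto (fun n : ℕ => ((n:ℝ)+(i:ℝ))) atTop atTop :=
          tendsto_atTop_add_const_right _ _ tendsto_natCast_atTop_atTop
        have h2 : Tendsto (fun n : ℕ => (i:ℝ)/((n:ℝ)+(i:ℝ))) atTop (𝓝 0) :=
          tendsto_const_nhds.div_atTop hb
        have h3 : Tendsto (fun n : ℕ => 1 - (i:ℝ)/((n:ℝ)+(i:ℝ))) atTop (𝓝 1) := by
          simpa using tendsto_const_nhds.sub h2
        apply h3.congr'
        filter_upwards [eventually_ge_atTop 1] with n hn
        have hpos : (0:ℝ) < (n:ℝ)+(i:ℝ) := by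
          have : (1:ℝ) ≤ n := by exact_mod_cast hn
          linarith [Nat.cast_nonneg (α := ℝ) i]
        field_simp
        ring
      have h2 : Tendsto (fun n : ℕ => ((n:ℝ)/((n:ℝ)+(i:ℝ))) ^ p) atTop (𝓝 1) := by
        have := h1.rpow_const (p := p) (Or.inr hp)
        simpa using this
      simpa using (tendsto_const_nhds (x := r ^ i)).mul h2
    · filter_upwards with n
      intro i; exact hSbound n i
  -- key identity
  have hSd : ∀ n : ℕ, 1 ≤ n → S n * d n = ∑' i : ℕ, d (i + n) := by
    intro n hn
    rw [hS]
    rw [← tsum_mul_right]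
    congr 1; funext i
    have hn0 : (0:ℝ) < n := by exact_mod_cast hn
    have hni : (0:ℝ) < (n:ℝ)+(i:ℝ) := by linarith [Nat.cast_nonneg (α := ℝ) i]
    have hnp : (0:ℝ) < (n:ℝ) ^ p := Real.rpow_pos_of_pos hn0 p
    have hnip : (0:ℝ) < ((n:ℝ)+(i:ℝ)) ^ p := Real.rpow_pos_of_pos hni p
    show r ^ i * ((n:ℝ)/((n:ℝ)+(i:ℝ))) ^ p * (r ^ n * (n:ℝ) ^ (-p))
        = r ^ (i+n) * (((i+n : ℕ):ℝ)) ^ (-p)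
    have hcast : (((i+n : ℕ):ℝ)) = (n:ℝ)+(i:ℝ) := by push_cast; ring
    rw [hcast, Real.div_rpow (Nat.cast_nonneg n) hni.le, Real.rpow_neg hn0.le,
      Real.rpow_neg hni.le, pow_add]
    field_simp
  -- eventual bound from ha
  have haev : ∀ ε : ℝ, 0 < ε → ∀ᶠ m : ℕ in atTop, |a m - L * d m| ≤ ε * d m := by
    intro ε hε
    filter_upwards [Metric.tendsto_nhds.mp ha ε hε, eventually_ge_atTop 1] with m h1 h2
    have hdm := hd_pos m h2
    rw [Real.dist_eq] at h1
    have h3 : |a m / d m - L| ≤ ε := h1.le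
    have h4 : a m - L * d m = (a m / d m - L) * d m := by field_simp
    rw [h4, abs_mul, abs_of_pos hdm]
    exact mul_le_mul_of_nonneg_right h3 hdm.le
  have hsum_a : ∀ᶠ n : ℕ in atTop, Summable (fun i : ℕ => a (i + n)) := by
    obtain ⟨N0, hN0⟩ := eventually_atTop.mp ((haev 1 one_pos).and (eventually_ge_atTop 1))
    filter_upwards [eventually_ge_atTop N0] with n hn
    apply Summable.of_norm_bounded (g := fun i => (|L| + 1) * d (i + n))
      (((hsum_d n (hN0 n hn).2).mul_left _))
    intro i
    have hm := hN0 (i + n) (by omega)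
    have hdm := hd_pos (i + n) hm.2
    calc ‖a (i + n)‖ = |a (i + n) - L * d (i + n) + L * d (i + n)| := by
          rw [Real.norm_eq_abs, sub_add_cancel]
      _ ≤ |a (i + n) - L * d (i + n)| + |L * d (i + n)| := abs_add_le _ _
      _ ≤ 1 * d (i + n) + |L| * d (i + n) := by
          refine add_le_add hm.1 ?_
          rw [abs_mul, abs_of_pos hdm]
      _ = (|L| + 1) * d (i + n) := by ring
  -- difference tends to zero
  have hdiff : Tendsto (fun n : ℕ => (∑' k : ℕ, a (k + n)) / d n - L * S n) atTop (𝓝 0) := by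
    rw [Metric.tendsto_atTop]
    intro ε' hε'
    have hr' : 0 < 1 - r := by linarith
    set ε : ℝ := ε' * (1 - r) / 2 with hε_def
    have hε : 0 < ε := by positivity
    obtain ⟨N1, hN1⟩ := eventually_atTop.mp
      (((haev ε hε).and (eventually_ge_atTop 1)).and hsum_a)
    refine ⟨N1, fun n hn => ?_⟩
    have hn1 : 1 ≤ n := ((hN1 n hn).1).2
    have hdn := hd_pos n hn1
    have hsa : Summable (fun i : ℕ => a (i + n)) := (hN1 n hn).2
    have hsd := hsum_d n hn1
    have key : |(∑' k : ℕ, a (k + n)) - L * (S n * d n)| ≤ ε * (S n * d n) := by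
      rw [hSd n hn1, ← tsum_mul_left, ← Summable.tsum_sub hsa (hsd.mul_left L)]
      calc |∑' i : ℕ, (a (i + n) - L * d (i + n))|
          ≤ ∑' i : ℕ, |a (i + n) - L * d (i + n)| := by
            simp only [← Real.norm_eq_abs]
            exact norm_tsum_le_tsum_norm
              (by simpa [Real.norm_eq_abs] using (hsa.sub (hsd.mul_left L)).abs)
        _ ≤ ∑' i : ℕ, ε * d (i + n) := by
            apply Summable.tsum_le_tsum _ ((hsa.sub (hsd.mul_left L)).abs) (hsd.mul_left ε)
            intro i
            exact ((hN1 (i + n) (by omega)).1).1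
        _ = ε * ∑' i : ℕ, d (i + n) := tsum_mul_left
    have heq : (∑' k : ℕ, a (k + n)) / d n - L * S n
        = ((∑' k : ℕ, a (k + n)) - L * (S n * d n)) / d n := by
      field_simp
    rw [Real.dist_eq, sub_zero, heq, abs_div, abs_of_pos hdn]
    rw [div_lt_iff₀ hdn]
    calc |(∑' k : ℕ, a (k + n)) - L * (S n * d n)| ≤ ε * (S n * d n) := key
      _ = (ε * S n) * d n := by ring
      _ ≤ (ε * (1/(1-r))) * d n := by
          apply mul_le_mul_of_nonneg_right _ hdn.le
          exact mul_le_mul_of_nonneg_left (hSle n) hε.le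
      _ = (ε'/2) * d n := by rw [hε_def]; field_simp
      _ < ε' * d n := by
          apply mul_lt_mul_of_pos_right _ hdn
          linarith
  have hfinal := hdiff.add (hS_lim.const_mul L)
  rw [zero_add] at hfinal
  have hL : L * (1/(1-r)) = L / (1 - r) := by ring
  rw [hL] at hfinal
  apply hfinal.congr
  intro n
  show (∑' k : ℕ, a (k + n)) / d n - L * S n + L * S n = _
  ring

lemma nat_div_succ_lim : Tendsto (fun i : ℕ => (i:ℝ)/((i:ℝ)+1)) atTop (𝓝 1) := by
  have hb : Tendsto (fun i : ℕ => ((i:ℝ)+1)) atTop atTop :=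
    tendsto_atTop_add_const_right _ _ tendsto_natCast_atTop_atTop
  have h2 : Tendsto (fun i : ℕ => 1 - 1/((i:ℝ)+1)) atTop (𝓝 (1 - 0)) :=
    tendsto_const_nhds.sub (tendsto_const_nhds.div_atTop hb)
  rw [sub_zero] at h2
  apply h2.congr
  intro i
  have : (0:ℝ) < (i:ℝ)+1 := by positivity
  field_simp
  ring
end Aux

/-- Asymptotics of `P(b̃ = j)` as j → ∞. -/
theorem stmt18 (ρ : ℝ) (hρ : ρ ∈ Set.Ioo (0:ℝ) 1) :
    Filter.Tendsto (fun j : ℕ =>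
      btilde ρ j /
        ((4 * (1 + ρ) / ((1 - ρ) ^ 3 * Real.sqrt Real.pi)) * (j:ℝ) ^ (-(5:ℝ)/2) *
          (4 * ρ / (1 + ρ) ^ 2) ^ j))
      Filter.atTop (nhds 1) := by
  obtain ⟨hρ0, hρ1⟩ := hρ
  have h1ρ : (0:ℝ) < 1 + ρ := by linarith
  have h1mρ : (0:ℝ) < 1 - ρ := by linarith
  have hπ : (0:ℝ) < Real.sqrt Real.pi := Real.sqrt_pos.mpr Real.pi_pos
  set A : ℝ := 4 * (1 + ρ) / ((1 - ρ) ^ 3 * Real.sqrt Real.pi) with hA_def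
  have hA : 0 < A := by positivity
  set r : ℝ := 4 * ρ / (1 + ρ) ^ 2 with hr_def
  have hr0 : 0 < r := by positivity
  have hr1 : r < 1 := by
    rw [hr_def, div_lt_one (by positivity)]
    nlinarith
  have h1mr : (0:ℝ) < 1 - r := by linarith
  set C : ℝ := (1 - ρ) / (ρ * (1 + ρ)) with hC_def
  set a : ℕ → ℝ := fun i => (Nat.choose (2*i) i : ℝ) * ρ^i / (((i:ℝ)+1) * (1+ρ)^(2*i))
    with ha_def
  -- Step A: asymptotics of a
  have hA1 : Tendsto (fun i : ℕ => a i / (r^i * (i:ℝ)^(-((3:ℝ)/2)))) atTop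
      (𝓝 (1/Real.sqrt Real.pi)) := by
    have h1 : Tendsto (fun i : ℕ =>
        ((Nat.centralBinom i : ℝ) * Real.sqrt i / 4^i) * ((i:ℝ)/((i:ℝ)+1))) atTop
        (𝓝 ((1/Real.sqrt Real.pi) * 1)) := centralBinom_asymp.mul nat_div_succ_lim
    rw [mul_one] at h1
    apply h1.congr'
    filter_upwards [eventually_ge_atTop 1] with i hi
    have hi0 : (0:ℝ) < i := by exact_mod_cast hi
    have hsi : 0 < Real.sqrt i := Real.sqrt_pos.mpr hi0
    have hrpow : (i:ℝ)^(-((3:ℝ)/2)) = ((i:ℝ) * Real.sqrt i)⁻¹ := by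
      rw [Real.rpow_neg hi0.le, show ((3:ℝ)/2) = 1 + 1/2 by norm_num,
        Real.rpow_add hi0, Real.rpow_one, ← Real.sqrt_eq_rpow]
    have hr_pow : r ^ i = 4^i * ρ^i / ((1+ρ)^(2*i)) := by
      rw [hr_def, div_pow, mul_pow, ← pow_mul]
    rw [ha_def, Nat.centralBinom]
    simp only
    rw [hrpow, hr_pow]
    have h4 : (0:ℝ) < 4^i := by positivity
    have hρi : (0:ℝ) < ρ^i := by positivity
    have h1ρi : (0:ℝ) < (1+ρ)^(2*i) := by positivity
    field_simp
  -- Step B: asymptotics of resBusy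
  have hres : ∀ ℓ : ℕ, resBusy ρ ℓ = C * ∑' k : ℕ, a (k + ℓ) := by
    intro ℓ
    rw [resBusy, hC_def]
    congr 1
    apply tsum_congr
    intro k
    rw [ha_def]
    simp only
    push_cast
    ring_nf
  have hB : Tendsto (fun ℓ : ℕ => resBusy ρ ℓ / (r^ℓ * (ℓ:ℝ)^(-((3:ℝ)/2)))) atTop
      (𝓝 (C * ((1/Real.sqrt Real.pi)/(1-r)))) := by
    have h := (tail_equiv hr0 hr1 (by norm_num) hA1).const_mul C
    apply h.congr
    intro ℓ
    rw [hres ℓ]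
    ring
  -- Step C: asymptotics of b k = resBusy k / k
  set b : ℕ → ℝ := fun k => resBusy ρ k / k with hb_def
  have hC2 : Tendsto (fun k : ℕ => b k / (r^k * (k:ℝ)^(-((5:ℝ)/2)))) atTop
      (𝓝 (C * ((1/Real.sqrt Real.pi)/(1-r)))) := by
    apply hB.congr'
    filter_upwards [eventually_ge_atTop 1] with k hk
    have hk0 : (0:ℝ) < k := by exact_mod_cast hk
    have key : (k:ℝ)^(-((5:ℝ)/2)) = (k:ℝ)^(-((3:ℝ)/2)) * (k:ℝ)⁻¹ := by
      rw [← Real.rpow_neg_one (k:ℝ), ← Real.rpow_add hk0]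
      norm_num
    have hkp : (0:ℝ) < (k:ℝ)^(-((3:ℝ)/2)) := Real.rpow_pos_of_pos hk0 _
    rw [hb_def]
    simp only
    rw [key]
    have hrk : (0:ℝ) < r^k := by positivity
    field_simp
  -- Step D: tail of b
  have hD : Tendsto (fun ℓ : ℕ => (∑' k : ℕ, b (k + ℓ)) / (r^ℓ * (ℓ:ℝ)^(-((5:ℝ)/2)))) atTop
      (𝓝 ((C * ((1/Real.sqrt Real.pi)/(1-r)))/(1-r))) :=
    tail_equiv hr0 hr1 (by norm_num) hC2
  have hbt : ∀ j : ℕ, btilde ρ j = ∑' k : ℕ, b (k + (j+1)) := by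
    intro j
    rw [btilde]
    apply tsum_congr
    intro k
    rw [hb_def]
    simp only
    have h1 : k + j + 1 = k + (j + 1) := by omega
    rw [h1]
    congr 1
    push_cast
    ring
  have hE : Tendsto (fun j : ℕ => btilde ρ j /
      (r^(j+1) * (((j+1 : ℕ)):ℝ)^(-((5:ℝ)/2)))) atTop
      (𝓝 ((C * ((1/Real.sqrt Real.pi)/(1-r)))/(1-r))) := by
    have h := hD.comp (tendsto_add_atTop_nat 1)
    apply h.congr
    intro j
    simp only [Function.comp]
    rw [hbt j]
  -- Step E: final assembly
  have hu : Tendsto (fun j : ℕ => ((j:ℝ)/((j:ℝ)+1))^((5:ℝ)/2)) atTop (𝓝 1) := by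
    have h := nat_div_succ_lim.rpow_const (p := (5:ℝ)/2) (Or.inr (by norm_num))
    simpa using h
  have hmain := hE.mul (hu.const_mul (r/A))
  have hone : (C * ((1/Real.sqrt Real.pi)/(1-r)))/(1-r) * ((r/A) * 1) = 1 := by
    have h1r : (1:ℝ) - r = (1-ρ)^2/(1+ρ)^2 := by
      rw [hr_def]; field_simp; ring
    rw [mul_one, h1r, hC_def, hr_def, hA_def]
    field_simp
  rw [hone] at hmain
  apply hmain.congr'
  filter_upwards [eventually_ge_atTop 1] with j hj
  have hj0 : (0:ℝ) < j := by exact_mod_cast hj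
  have hj1 : (0:ℝ) < (j:ℝ)+1 := by linarith
  have hcast : (((j+1 : ℕ)):ℝ) = (j:ℝ)+1 := by push_cast; ring
  have hdiv : ((j:ℝ)/((j:ℝ)+1))^((5:ℝ)/2) = (j:ℝ)^((5:ℝ)/2) / ((j:ℝ)+1)^((5:ℝ)/2) :=
    Real.div_rpow hj0.le hj1.le _
  have hPj : (j:ℝ)^(-((5:ℝ)/2)) = ((j:ℝ)^((5:ℝ)/2))⁻¹ := Real.rpow_neg hj0.le _
  have hQj : ((j:ℝ)+1)^(-((5:ℝ)/2)) = (((j:ℝ)+1)^((5:ℝ)/2))⁻¹ := Real.rpow_neg hj1.le _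
  have hPpos : (0:ℝ) < (j:ℝ)^((5:ℝ)/2) := Real.rpow_pos_of_pos hj0 _
  have hQpos : (0:ℝ) < ((j:ℝ)+1)^((5:ℝ)/2) := Real.rpow_pos_of_pos hj1 _
  have hrj : (0:ℝ) < r^j := by positivity
  simp only [neg_div]
  rw [hcast, hdiv, hPj, hQj]
  have hbt' : btilde ρ j = btilde ρ j := rfl
  field_simp
  ring
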